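/- Let V be a finite-dimensional real vector space, U : V^3 → ℝ a trilinear map that is either totally symmetric or totally antisymmetric, and w : V → ℝ a linear functional. Then y_t*(U⊗w) = 0 and y_t*(w⊗U) = 0. -/

import Mathlib

/-- Pointwise action of a group ring element `a ∈ ℝ[S_r]` on a function
`T : V^r → ℝ`: `(aT)(v₁,…,v_r) = Σ_p a(p)·T(v_{p(1)},…,v_{p(r)})`. -/
noncomputable def fact {V : Type} [AddCommGroup V] [Module ℝ V] {r : ℕ}
    (a : MonoidAlgebra ℝ (Equiv.Perm (Fin r)))
    (T : (Fin r → V) → ℝ) : (Fin r → V) → ℝ :=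
  fun v => ∑ p : Equiv.Perm (Fin r), a.coeff p * T (fun i => v (p i))
/-- The star map `a* := Σ_p a(p)·p⁻¹` on the group ring `ℝ[S_r]`. -/
noncomputable def astar {r : ℕ} (a : MonoidAlgebra ℝ (Equiv.Perm (Fin r))) :
    MonoidAlgebra ℝ (Equiv.Perm (Fin r)) :=
  MonoidAlgebra.ofCoeff (Finsupp.equivFunOnFinite.symm (fun p => a.coeff p⁻¹))
/-- The Young symmetrizer `y_t = Σ_{p∈H_t} Σ_{q∈V_t} sign(q)·(p∘q)` of the tableau with
rows `{1,3}`, `{2,4}` (indices `0`-based in `Fin 4`):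
`H_t = {id, (1 3), (2 4), (1 3)(2 4)}`, `V_t = {id, (1 2), (3 4), (1 2)(3 4)}`. -/
noncomputable def yt : MonoidAlgebra ℝ (Equiv.Perm (Fin 4)) :=
  (MonoidAlgebra.single 1 1 + MonoidAlgebra.single (Equiv.swap 0 2) 1 +
     MonoidAlgebra.single (Equiv.swap 1 3) 1 +
     MonoidAlgebra.single (Equiv.swap 0 2 * Equiv.swap 1 3) 1) *
  (MonoidAlgebra.single 1 1 - MonoidAlgebra.single (Equiv.swap 0 1) 1 -
     MonoidAlgebra.single (Equiv.swap 2 3) 1 +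
     MonoidAlgebra.single (Equiv.swap 0 1 * Equiv.swap 2 3) 1)

lemma fact_astar_single {V : Type} [AddCommGroup V] [Module ℝ V] {r : ℕ}
    (g : Equiv.Perm (Fin r)) (c : ℝ) (T : (Fin r → V) → ℝ) (v : Fin r → V) :
    fact (astar (MonoidAlgebra.single g c)) T v = c * T (fun i => v (g⁻¹ i)) := by
  simp only [fact, astar, MonoidAlgebra.coeff_ofCoeff, Finsupp.coe_equivFunOnFinite_symm,
    MonoidAlgebra.single_apply, ite_mul, zero_mul]
  rw [Finset.sum_eq_single g⁻¹]
  · simp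
  · intro b _ hb
    rw [if_neg]
    intro h; exact hb (by rw [h, inv_inv])
  · simp

lemma fact_astar_add {V : Type} [AddCommGroup V] [Module ℝ V] {r : ℕ}
    (a b : MonoidAlgebra ℝ (Equiv.Perm (Fin r))) (T : (Fin r → V) → ℝ) (v : Fin r → V) :
    fact (astar (a + b)) T v = fact (astar a) T v + fact (astar b) T v := by
  have h : ∀ x : Equiv.Perm (Fin r), (a + b).coeff x = a.coeff x + b.coeff x := fun _ => rfl
  simp [fact, astar, h, add_mul, Finset.sum_add_distrib]

lemma fact_astar_sub {V : Type} [AddCommGroup V] [Module ℝ V] {r : ℕ}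
    (a b : MonoidAlgebra ℝ (Equiv.Perm (Fin r))) (T : (Fin r → V) → ℝ) (v : Fin r → V) :
    fact (astar (a - b)) T v = fact (astar a) T v - fact (astar b) T v := by
  have h : ∀ x : Equiv.Perm (Fin r), (a - b).coeff x = a.coeff x - b.coeff x := fun _ => rfl
  simp [fact, astar, h, sub_mul, Finset.sum_sub_distrib]

/-- If `U : V³ → ℝ` is trilinear and totally symmetric or totally
antisymmetric and `w : V → ℝ` is linear, then `y_t*(U⊗w) = 0` and `y_t*(w⊗U) = 0`. -/
theorem stmt_11 (V : Type) [AddCommGroup V] [Module ℝ V] [FiniteDimensional ℝ V]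
    (U : MultilinearMap ℝ (fun _ : Fin 3 => V) ℝ) (w : V →ₗ[ℝ] ℝ)
    (hU : (∀ (v : Fin 3 → V) (p : Equiv.Perm (Fin 3)), U (fun i => v (p i)) = U v) ∨
          (∀ (v : Fin 3 → V) (p : Equiv.Perm (Fin 3)),
            U (fun i => v (p i)) = ((Equiv.Perm.sign p : ℤ) : ℝ) * U v)) :
    (∀ v : Fin 4 → V,
      fact (astar yt) (fun v' => U ![v' 0, v' 1, v' 2] * w (v' 3)) v = 0) ∧
    (∀ v : Fin 4 → V,
      fact (astar yt) (fun v' => w (v' 0) * U ![v' 1, v' 2, v' 3]) v = 0) := by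
  -- extract a uniform sign `s` with the three swap rules
  have e01 : ∀ x y z : V, (fun i => (![x, y, z] : Fin 3 → V) (Equiv.swap 0 1 i)) = ![y, x, z] := by
    intro x y z; funext i; fin_cases i <;> simp [Equiv.swap_apply_def]
  have e12 : ∀ x y z : V, (fun i => (![x, y, z] : Fin 3 → V) (Equiv.swap 1 2 i)) = ![x, z, y] := by
    intro x y z; funext i; fin_cases i <;> simp [Equiv.swap_apply_def]
  have e02 : ∀ x y z : V, (fun i => (![x, y, z] : Fin 3 → V) (Equiv.swap 0 2 i)) = ![z, y, x] := by
    intro x y z; funext i; fin_cases i <;> simp [Equiv.swap_apply_def]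
  obtain ⟨s, hs, hxy, hyz, hxz⟩ :
      ∃ s : ℝ, (s = 1 ∨ s = -1) ∧
        (∀ x y z : V, U ![y, x, z] = s * U ![x, y, z]) ∧
        (∀ x y z : V, U ![x, z, y] = s * U ![x, y, z]) ∧
        (∀ x y z : V, U ![z, y, x] = s * U ![x, y, z]) := by
    rcases hU with h | h
    · refine ⟨1, Or.inl rfl, fun x y z => ?_, fun x y z => ?_, fun x y z => ?_⟩ <;>
        rw [one_mul]
      · rw [← e01 x y z]; exact h ![x, y, z] (Equiv.swap 0 1)
      · rw [← e12 x y z]; exact h ![x, y, z] (Equiv.swap 1 2)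
      · rw [← e02 x y z]; exact h ![x, y, z] (Equiv.swap 0 2)
    · refine ⟨-1, Or.inr rfl, fun x y z => ?_, fun x y z => ?_, fun x y z => ?_⟩
      · rw [← e01 x y z, h ![x, y, z] (Equiv.swap 0 1)]
        norm_num [Equiv.Perm.sign_swap (by decide : (0 : Fin 3) ≠ 1)]
      · rw [← e12 x y z, h ![x, y, z] (Equiv.swap 1 2)]
        norm_num [Equiv.Perm.sign_swap (by decide : (1 : Fin 3) ≠ 2)]
      · rw [← e02 x y z, h ![x, y, z] (Equiv.swap 0 2)]
        norm_num [Equiv.Perm.sign_swap (by decide : (0 : Fin 3) ≠ 2)]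
  constructor <;> intro v <;>
    · simp only [yt, mul_add, add_mul, mul_sub, sub_mul, MonoidAlgebra.single_mul_single,
        one_mul, mul_one]
      simp only [fact_astar_add, fact_astar_sub, fact_astar_single, mul_inv_rev, Equiv.swap_inv,
        one_mul, inv_one, Equiv.Perm.one_apply, Equiv.Perm.mul_apply, Equiv.swap_apply_def]
      norm_num
      simp only [Fin.reduceEq, reduceIte]
      norm_num
      rw [hxz (v 0) (v 1) (v 2), hxz (v 0) (v 3) (v 2), hyz (v 0) (v 2) (v 3),
        hxy (v 0) (v 1) (v 2), hxy (v 0) (v 2) (v 1), hyz (v 0) (v 1) (v 2),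
        hxz (v 1) (v 3) (v 2), hyz (v 1) (v 2) (v 3),
        hxz (v 0) (v 1) (v 3), hxz (v 0) (v 2) (v 3), hxy (v 0) (v 1) (v 3),
        hxy (v 0) (v 3) (v 1), hyz (v 0) (v 1) (v 3), hxz (v 1) (v 2) (v 3)]
      rcases hs with rfl | rfl <;> ring
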